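/- Let −1 ≤ a < b < 1 with a + b ≥ 0, let d ≥ 1, n > d, and let v_1, …, v_n be unit vectors in ℝ^d such that ⟨v_i, v_j⟩ ∈ {a, b} for all i ≠ j. Let S = (2G − (a+b)·J + (a+b−2)·I)/(b − a), where G is the Gram matrix of the v_i and J is the all-ones matrix. Set c = (a + b − 2)/(b − a). Then (X − c)^{n−d−1} divides the characteristic polynomial of S, and, counting multiplicities, S has at most one eigenvalue strictly less than c. -/

import Mathlib

open Polynomial Matrix

lemma charpoly_diagonal' {n : Type*} [Fintype n] [DecidableEq n] (w : n → ℝ) :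
    (Matrix.diagonal w).charpoly = ∏ i, (X - C (w i)) := by
  have h : charmatrix (diagonal w) = diagonal (fun i => (X : ℝ[X]) - C (w i)) := by
    ext i j
    by_cases h : i = j <;> simp [charmatrix_apply, diagonal_apply, h]
  rw [Matrix.charpoly, h, det_diagonal]

lemma charpoly_conj' {n : Type*} [Fintype n] [DecidableEq n]
    (U D : Matrix n n ℝ) (hU : U * star U = 1) :
    (U * D * star U).charpoly = D.charpoly := by
  have hsc : (Matrix.scalar n (X : ℝ[X])) = (X : ℝ[X]) • (1 : Matrix n n ℝ[X]) := by
    ext i j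
    by_cases h : i = j <;> simp [Matrix.scalar_apply, Matrix.one_apply, h]
  have hmap : ∀ (A B : Matrix n n ℝ),
      (A * B).map (C : ℝ →+* ℝ[X]) = A.map C * B.map C := fun A B => (Matrix.map_mul ..)
  have key : charmatrix (U * D * star U)
      = U.map C * charmatrix D * (star U).map C := by
    rw [charmatrix, charmatrix]
    rw [mul_sub, sub_mul, hsc]
    congr 1
    · rw [mul_smul_comm, smul_mul_assoc, mul_one, ← hmap, hU]
      simp
    · simp only [RingHom.mapMatrix_apply]
      rw [hmap, hmap]
  rw [Matrix.charpoly, Matrix.charpoly, key, det_mul, det_mul]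
  have hdet : (U.map (C : ℝ →+* ℝ[X])).det * ((star U).map (C : ℝ →+* ℝ[X])).det = 1 := by
    rw [← det_mul, ← hmap, hU]
    simp
  rw [mul_comm (U.map (C : ℝ →+* ℝ[X])).det, mul_assoc, hdet, mul_one]

theorem stmt8 (d n : ℕ) (hd : 1 ≤ d) (hn : d < n)
    (a b : ℝ) (ha : -1 ≤ a) (hab : a < b) (hb : b < 1) (hsum : 0 ≤ a + b)
    (v : Fin n → EuclideanSpace ℝ (Fin d))
    (hunit : ∀ i, ‖v i‖ = 1)
    (hinner : ∀ i j, i ≠ j →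
      (inner ℝ (v i) (v j) : ℝ) = a ∨ (inner ℝ (v i) (v j) : ℝ) = b)
    (G J S : Matrix (Fin n) (Fin n) ℝ)
    (hG : ∀ i j, G i j = (inner ℝ (v i) (v j) : ℝ))
    (hJ : ∀ i j, J i j = 1)
    (hS : S = (b - a)⁻¹ •
      ((2 : ℝ) • G - (a + b) • J + (a + b - 2) • (1 : Matrix (Fin n) (Fin n) ℝ)))
    (c : ℝ) (hc : c = (a + b - 2) / (b - a)) :
    (X - C c) ^ (n - d - 1) ∣ S.charpoly ∧
      Multiset.card (S.charpoly.roots.filter (fun x => x < c)) ≤ 1 := by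
  have hba : (0:ℝ) < b - a := sub_pos.2 hab
  -- S is symmetric
  have hH : S.IsHermitian := by
    rw [Matrix.IsHermitian, hS]
    ext i j
    simp only [conjTranspose_apply, Matrix.smul_apply, Matrix.add_apply, Matrix.sub_apply,
      Matrix.one_apply, hG, hJ, star_trivial]
    rw [real_inner_comm]
    by_cases h : i = j <;> simp [h, eq_comm]
  set μ : Fin n → ℝ := hH.eigenvalues with hμ
  set U : Matrix (Fin n) (Fin n) ℝ := (hH.eigenvectorUnitary : Matrix (Fin n) (Fin n) ℝ) with hU
  have hUU : U * star U = 1 := Matrix.mem_unitaryGroup_iff.mp hH.eigenvectorUnitary.2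
  have hspec : S = U * Matrix.diagonal μ * star U := by
    have h := hH.spectral_theorem
    simpa using h
  have hchar : S.charpoly = ∏ i, (X - C (μ i)) := by
    rw [hspec, charpoly_conj' U _ hUU, charpoly_diagonal']
  have hroots : S.charpoly.roots = Finset.univ.val.map μ := by
    rw [hchar]
    have h2 : ∏ i, (X - C (μ i)) = ((Finset.univ.val.map μ).map (fun r => X - C r)).prod := by
      rw [Multiset.map_map]
      rfl
    rw [h2, Polynomial.roots_multiset_prod_X_sub_C]
  set M : Matrix (Fin n) (Fin n) ℝ := S - c • 1 with hM
  have hMspec : M = U * Matrix.diagonal (fun i => μ i - c) * star U := by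
    have h1 : Matrix.diagonal (fun i => μ i - c)
        = Matrix.diagonal μ - c • (1 : Matrix (Fin n) (Fin n) ℝ) := by
      ext i j
      by_cases h : i = j <;> simp [diagonal_apply, Matrix.one_apply, h]
    rw [h1, mul_sub, sub_mul, ← hspec, hM]
    congr 1
    rw [mul_smul_comm, smul_mul_assoc, mul_one, hUU]
  have hdetU : IsUnit U.det := by
    have h := congrArg Matrix.det hUU
    rw [det_mul, det_one] at h
    exact IsUnit.of_mul_eq_one _ h
  have hdetU' : IsUnit (star U).det := by
    have h := congrArg Matrix.det hUU
    rw [det_mul, det_one, mul_comm] at h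
    exact IsUnit.of_mul_eq_one _ h
  have hrankM : M.rank = Fintype.card {i // μ i - c ≠ 0} := by
    rw [hMspec, Matrix.rank_mul_eq_left_of_isUnit_det _ _ hdetU',
      Matrix.rank_mul_eq_right_of_isUnit_det _ _ hdetU, Matrix.rank_diagonal]
  set P : Matrix (Fin d ⊕ Unit) (Fin n) ℝ :=
    Matrix.of (fun k i => Sum.elim (fun k' => (v i) k' : Fin d → ℝ) (fun _ => 1) k) with hP
  set Q : Matrix (Fin d ⊕ Unit) (Fin n) ℝ :=
    Matrix.of (fun k j => Sum.elim (fun k' => 2 * (v j) k' : Fin d → ℝ) (fun _ => -(a + b)) k)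
    with hQ
  have hinner_sum : ∀ i j, (inner ℝ (v i) (v j) : ℝ) = ∑ k, (v i) k * (v j) k := by
    intro i j
    simp [PiLp.inner_apply, RCLike.inner_apply, conj_trivial]
    exact Finset.sum_congr rfl fun _ _ => mul_comm _ _
  have hfact : M = ((b - a)⁻¹ • (1 : Matrix (Fin n) (Fin n) ℝ)) * (Pᵀ * Q) := by
    rw [Matrix.smul_mul, one_mul]
    ext i j
    simp only [hM, hS, Matrix.sub_apply, Matrix.smul_apply, Matrix.add_apply,
      Matrix.mul_apply, transpose_apply, hP, hQ, of_apply, hJ, hG, hinner_sum,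
      Fintype.sum_sum_type, Sum.elim_inl, Sum.elim_inr, smul_eq_mul]
    rw [hc]
    have hone : ∀ x y : Fin n, ((1 : Matrix (Fin n) (Fin n) ℝ)) x y = if x = y then 1 else 0 :=
      fun x y => Matrix.one_apply
    rw [hone]
    have hba' : b - a ≠ 0 := ne_of_gt hba
    by_cases h : i = j <;> simp only [h, if_true, if_false] <;> field_simp <;> ring_nf <;>
      simp only [Finset.univ_unique, Finset.sum_singleton, Finset.sum_mul] <;> ring
  have hrank_le : M.rank ≤ d + 1 := by
    calc M.rank ≤ (Pᵀ * Q).rank := by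
          rw [hfact]; exact Matrix.rank_mul_le_right _ _
    _ ≤ Q.rank := Matrix.rank_mul_le_right _ _
    _ ≤ Fintype.card (Fin d ⊕ Unit) := Matrix.rank_le_card_height Q
    _ = d + 1 := by simp
  have hcard_ne : (Finset.univ.filter (fun i => ¬ μ i = c)).card ≤ d + 1 := by
    have h1 : Fintype.card {i // μ i - c ≠ 0}
        = (Finset.univ.filter (fun i => ¬ μ i = c)).card := by
      rw [Fintype.card_subtype]
      congr 1
      ext i
      simp [sub_ne_zero]
    rw [← h1, ← hrankM]
    exact hrank_le
  have hsplit := Finset.card_filter_add_card_filter_not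
    (s := (Finset.univ : Finset (Fin n))) (p := fun i => μ i = c)
  rw [Finset.card_univ, Fintype.card_fin] at hsplit
  have hcard_eq : n - (d + 1) ≤ (Finset.univ.filter (fun i => μ i = c)).card := by omega
  have hcount : S.charpoly.roots.count c = (Finset.univ.filter (fun i => μ i = c)).card := by
    rw [hroots, Multiset.count_map]
    have h3 : (Finset.univ.filter (fun i => μ i = c)).card
        = Multiset.card (Multiset.filter (fun i => μ i = c) Finset.univ.val) := by
      rw [Finset.card, Finset.filter_val]
    rw [h3]
    congr 1
    apply Multiset.filter_congr
    intro i _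
    constructor
    · exact fun h => h.symm
    · exact fun h => h.symm
  have goal1 : (X - C c) ^ (n - d - 1) ∣ S.charpoly := by
    have hm : n - d - 1 ≤ S.charpoly.rootMultiplicity c := by
      rw [← Polynomial.count_roots, hcount]
      omega
    exact (pow_dvd_pow _ hm).trans (Polynomial.pow_rootMultiplicity_dvd _ _)
  refine ⟨goal1, ?_⟩
  have hfilter : Multiset.card (S.charpoly.roots.filter (fun x => x < c))
      = (Finset.univ.filter (fun i => μ i < c)).card := by
    rw [hroots, Multiset.filter_map, Multiset.card_map]
    rw [Finset.card, Finset.filter_val]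
    rfl
  rw [hfilter]
  by_contra hcon
  push_neg at hcon
  obtain ⟨i, hi, j, hj, hij⟩ := Finset.one_lt_card.mp hcon
  rw [Finset.mem_filter] at hi hj
  have hμi : μ i < c := hi.2
  have hμj : μ j < c := hj.2
  set ui : Fin n → ℝ := ⇑(hH.eigenvectorBasis i) with hui
  set uj : Fin n → ℝ := ⇑(hH.eigenvectorBasis j) with huj
  have horth := hH.eigenvectorBasis.orthonormal
  rw [orthonormal_iff_ite] at horth
  have hdot : ∀ k l : Fin n, (⇑(hH.eigenvectorBasis k) ⬝ᵥ ⇑(hH.eigenvectorBasis l) : ℝ)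
      = if k = l then 1 else 0 := by
    intro k l
    simpa [PiLp.inner_apply, RCLike.inner_apply, dotProduct, mul_comm] using horth k l
  set ti : ℝ := ∑ l, ui l with hti
  set tj : ℝ := ∑ l, uj l with htj
  obtain ⟨α, β, hzero, hne⟩ : ∃ α β : ℝ, α * ti + β * tj = 0 ∧ ¬(α = 0 ∧ β = 0) := by
    by_cases ht : ti = 0
    · exact ⟨1, 0, by simp [ht], by simp⟩
    · exact ⟨tj, -ti, by ring, fun h => ht (by simpa using congrArg Neg.neg h.2)⟩
  set w : Fin n → ℝ := α • ui + β • uj with hw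
  have hSui : S *ᵥ ui = μ i • ui := hH.mulVec_eigenvectorBasis i
  have hSuj : S *ᵥ uj = μ j • uj := hH.mulVec_eigenvectorBasis j
  have hSw : S *ᵥ w = (α * μ i) • ui + (β * μ j) • uj := by
    rw [hw, Matrix.mulVec_add, Matrix.mulVec_smul, Matrix.mulVec_smul, hSui, hSuj,
      smul_smul, smul_smul]
  have hq1 : w ⬝ᵥ (S *ᵥ w) = α ^ 2 * μ i + β ^ 2 * μ j := by
    rw [hSw, hw]
    simp only [add_dotProduct, dotProduct_add, smul_dotProduct, dotProduct_smul, hui, huj,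
      hdot, smul_eq_mul, hij, if_true, if_false, if_neg hij, if_neg (Ne.symm hij), if_pos rfl]
    ring
  have hww : w ⬝ᵥ w = α ^ 2 + β ^ 2 := by
    rw [hw]
    simp only [add_dotProduct, dotProduct_add, smul_dotProduct, dotProduct_smul, hui, huj,
      hdot, smul_eq_mul, if_neg hij, if_neg (Ne.symm hij), if_pos rfl, if_true]
    ring
  have hwsum : ∑ l, w l = 0 := by
    rw [hw]
    simp only [Pi.add_apply, Pi.smul_apply, smul_eq_mul, Finset.sum_add_distrib,
      ← Finset.mul_sum, ← hti, ← htj]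
    exact hzero
  have hJw : J *ᵥ w = 0 := by
    ext l
    simp only [Matrix.mulVec, dotProduct, hJ, one_mul, Pi.zero_apply]
    exact hwsum
  have hGw : 0 ≤ w ⬝ᵥ (G *ᵥ w) := by
    have hdotG : w ⬝ᵥ (G *ᵥ w) = ∑ l, ∑ m, w l * (w m * (inner ℝ (v l) (v m) : ℝ)) := by
      simp only [dotProduct, Matrix.mulVec, hG, Finset.mul_sum]
      exact Finset.sum_congr rfl fun l _ => Finset.sum_congr rfl fun m _ => by ring
    have hz : (inner ℝ (∑ l, w l • v l) (∑ m, w m • v m) : ℝ)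
        = ∑ l, ∑ m, w l * (w m * (inner ℝ (v l) (v m) : ℝ)) := by
      rw [sum_inner]
      refine Finset.sum_congr rfl fun l _ => ?_
      rw [real_inner_smul_left, inner_sum, Finset.mul_sum]
      refine Finset.sum_congr rfl fun m _ => ?_
      rw [real_inner_smul_right]
    rw [hdotG, ← hz]
    exact real_inner_self_nonneg
  have hq2 : w ⬝ᵥ (S *ᵥ w) = (b - a)⁻¹ * (2 * (w ⬝ᵥ (G *ᵥ w))) + c * (α ^ 2 + β ^ 2) := by
    rw [hS, Matrix.smul_mulVec, Matrix.add_mulVec, Matrix.sub_mulVec,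
      Matrix.smul_mulVec, Matrix.smul_mulVec, Matrix.smul_mulVec, hJw,
      Matrix.one_mulVec]
    simp only [smul_zero, sub_zero, dotProduct_smul, dotProduct_add, dotProduct_sub,
      smul_eq_mul, hww]
    rw [hc]
    have hba' : b - a ≠ 0 := ne_of_gt hba
    field_simp
  have hK : 0 ≤ (b - a)⁻¹ * (2 * (w ⬝ᵥ (G *ᵥ w))) :=
    mul_nonneg (inv_nonneg.mpr hba.le) (mul_nonneg (by norm_num) hGw)
  have hge : c * (α ^ 2 + β ^ 2) ≤ α ^ 2 * μ i + β ^ 2 * μ j := by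
    rw [hq1.symm.trans hq2]
    linarith [hK]
  have e3 : c * (α ^ 2 + β ^ 2) = α ^ 2 * c + β ^ 2 * c := by ring
  rcases not_and_or.mp hne with hα | hβ
  · have h2 : 0 < α ^ 2 := by positivity
    have e1 : α ^ 2 * μ i < α ^ 2 * c := mul_lt_mul_of_pos_left hμi h2
    have e2 : β ^ 2 * μ j ≤ β ^ 2 * c := mul_le_mul_of_nonneg_left (le_of_lt hμj) (sq_nonneg β)
    linarith
  · have h2 : 0 < β ^ 2 := by positivity
    have e1 : β ^ 2 * μ j < β ^ 2 * c := mul_lt_mul_of_pos_left hμj h2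
    have e2 : α ^ 2 * μ i ≤ α ^ 2 * c := mul_le_mul_of_nonneg_left (le_of_lt hμi) (sq_nonneg α)
    linarith
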